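/- Suppose Assumption (AQ) holds. Then for any m, m' ∈ P(E) and any η ∈ P*(R^d), ‖mM^η − m'M^η‖_TV ≤ (1 − ε_Q e^{−λ·osc(η)}) ‖m − m'‖_TV, where osc(η) = sup_{x,y∈R^d} |η(x) − η(y)| is the oscillation of the density of η. -/

import Mathlib

noncomputable section

open MeasureTheory ProbabilityTheory Filter Real
open scoped ENNReal NNReal

/-- Euclidean state space `ℝ^d`. -/
abbrev Rd (d : ℕ) : Type := EuclideanSpace ℝ (Fin d)

variable {d : ℕ}

/-- A probability density with respect to a reference measure `ℓ`. -/
def IsDensity (ℓ : Measure (Rd d)) (η : Rd d → ℝ) : Prop :=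
  Measurable η ∧ (∀ x, 0 ≤ η x) ∧ ∫ x, η x ∂ℓ = 1

/-- A transition-kernel density with respect to `ℓ`. -/
def IsKernelDensity (ℓ : Measure (Rd d)) (p : Rd d → Rd d → ℝ) : Prop :=
  Measurable (Function.uncurry p) ∧ (∀ x y, 0 ≤ p x y) ∧ ∀ x, ∫ y, p x y ∂ℓ = 1

/-- Measurable functions bounded by one. -/
def B1 (S : Type*) [MeasurableSpace S] : Set (S → ℝ) :=
  {f | Measurable f ∧ ∀ x, |f x| ≤ 1}

/-- Total-variation distance, as the supremum over `B1` test functions. -/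
def tvDist {S : Type*} [MeasurableSpace S] (μ ν : Measure S) : ℝ :=
  ⨆ f : B1 S, |∫ x, (f : S → ℝ) x ∂μ - ∫ x, (f : S → ℝ) x ∂ν|

/-- Total-variation distance between densities. -/
def tvDen (ℓ : Measure (Rd d)) (g h : Rd d → ℝ) : ℝ := ∫ x, |g x - h x| ∂ℓ

/-- Sup-norm distance between densities. -/
def supDist (g h : Rd d → ℝ) : ℝ := ⨆ x, |g x - h x|

/-- The transition kernel `M^Ψ` driven by the potential field `Ψ`. -/
def Mker {E : Set (Rd d)} (Q Q0 : Kernel E E) (lam : ℝ) (Ψ : Rd d → ℝ) (x : E) :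
    Measure E :=
  (Q x).withDensity (fun y => ENNReal.ofReal (Real.exp (-(lam * max (Ψ x.1 - Ψ y.1) 0))))
    + ENNReal.ofReal (1 - ∫ z, Real.exp (-(lam * max (Ψ x.1 - Ψ z.1) 0)) ∂(Q x)) • Q0 x

/-- `m ↦ m M^Ψ`. -/
def mStep {E : Set (Rd d)} (Q Q0 : Kernel E E) (lam : ℝ) (Ψ : Rd d → ℝ)
    (m : Measure E) : Measure E :=
  m.bind (Mker Q Q0 lam Ψ)

/-- The density of `η R_m`, where `R_m = (1-ε) P + ε m P'`. -/
def etaStep {E : Set (Rd d)} (ℓ : Measure (Rd d)) (p p' : Rd d → Rd d → ℝ) (ε : ℝ)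
    (m : Measure E) (η : Rd d → ℝ) : Rd d → ℝ :=
  fun y => (1 - ε) * ∫ x, η x * p x y ∂ℓ + ε * ∫ x, p' x.1 y ∂m

/-- One step `Φ(m, η) = (m M^η, η R_m)` of the nonlinear dynamics. -/
def Phi {E : Set (Rd d)} (Q Q0 : Kernel E E) (lam : ℝ) (ℓ : Measure (Rd d))
    (p p' : Rd d → Rd d → ℝ) (ε : ℝ) :
    Measure E × (Rd d → ℝ) → Measure E × (Rd d → ℝ) :=
  fun q => (mStep Q Q0 lam q.2 q.1, etaStep ℓ p p' ε q.1 q.2)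

/-- Empirical measure of `N` points. -/
def empMeas {E : Set (Rd d)} {N : ℕ} (x : Fin N → E) : Measure E :=
  (N : ℝ≥0∞)⁻¹ • ∑ j, Measure.dirac (x j)

/-- The potential field sequence `η_k^N` generated by the `N`-particle system. -/
def etaSeq {E : Set (Rd d)} (ℓ : Measure (Rd d)) (p p' : Rd d → Rd d → ℝ) (ε : ℝ)
    {Ω : Type*} {N : ℕ} (X : ℕ → Ω → (Fin N → E)) (η0 : Rd d → ℝ) :
    ℕ → Ω → Rd d → ℝ
  | 0 => fun _ => η0
  | k + 1 => fun ω => etaStep ℓ p p' ε (empMeas (X k ω)) (etaSeq ℓ p p' ε X η0 k ω)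

/-- History filtration of a process. -/
def histF {Ω α : Type*} [MeasurableSpace α] (X : ℕ → Ω → α) (k : ℕ) :
    MeasurableSpace Ω :=
  ⨆ i : Fin (k + 1), MeasurableSpace.comap (X i.1) inferInstance

/-- The `N`-interacting-particle system: conditionally on the past, the particles
move independently according to `M^{η_k^N}`. -/
structure IsParticleSystem {E : Set (Rd d)} (Q Q0 : Kernel E E) (lam : ℝ)
    (ℓ : Measure (Rd d)) (p p' : Rd d → Rd d → ℝ) (ε : ℝ) {N : ℕ}
    {Ω : Type*} [MeasurableSpace Ω] (Pr : Measure Ω)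
    (X : ℕ → Ω → (Fin N → E)) (η0 : Rd d → ℝ) : Prop where
  prob : IsProbabilityMeasure Pr
  meas_X : ∀ k, Measurable (X k)
  density_η0 : IsDensity ℓ η0
  condLaw : ∀ (k : ℕ) (A : Set (Fin N → E)), MeasurableSet A →
    ∀ B : Set Ω, MeasurableSet[histF X k] B →
      (Pr (B ∩ X (k + 1) ⁻¹' A)).toReal =
        ∫ ω in B, ((Measure.pi fun j =>
            Mker Q Q0 lam (etaSeq ℓ p p' ε X η0 k ω) (X k ω j)) A).toReal ∂Pr

/-- The potential field sequence `η̃_k^N` of the approximating particle scheme. -/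
def etaTildeSeq {E : Set (Rd d)} (ℓ : Measure (Rd d)) (p p' : Rd d → Rd d → ℝ) (ε : ℝ)
    {Ω : Type*} {N : ℕ} (X : ℕ → Ω → (Fin N → E)) (Y : ℕ → Ω → (Fin N → Rd d))
    (η0 : Rd d → ℝ) : ℕ → Ω → Rd d → ℝ
  | 0 => fun _ => η0
  | k + 1 => fun ω y =>
      (1 - ε) * ((N : ℝ)⁻¹ * ∑ i, p (Y (k + 1) ω i) y)
        + ε * ((N : ℝ)⁻¹ * ∑ j, p' (X k ω j).1 y)

/-- The approximating particle scheme: `X̃` are the particles, `Y` the auxiliary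
samples used to approximate the potential field. -/
structure IsSchemeSystem {E : Set (Rd d)} (Q Q0 : Kernel E E) (lam : ℝ)
    (ℓ : Measure (Rd d)) (p p' : Rd d → Rd d → ℝ) (ε : ℝ)
    (m0 : Measure E) (η0 : Rd d → ℝ) {N : ℕ}
    {Ω : Type*} [MeasurableSpace Ω] (Pr : Measure Ω)
    (X : ℕ → Ω → (Fin N → E)) (Y : ℕ → Ω → (Fin N → Rd d)) : Prop where
  prob : IsProbabilityMeasure Pr
  meas_X : ∀ k, Measurable (X k)
  meas_Y : ∀ k, Measurable (Y k)
  init_indep : iIndepFun (fun i ω => X 0 ω i) Pr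
  init_law : ∀ i, Pr.map (fun ω => X 0 ω i) = m0
  condLaw : ∀ (k : ℕ) (A : Set ((Fin N → E) × (Fin N → Rd d))), MeasurableSet A →
    ∀ B : Set Ω, MeasurableSet[histF X k ⊔ histF Y k] B →
      (Pr (B ∩ (fun ω => (X (k + 1) ω, Y (k + 1) ω)) ⁻¹' A)).toReal =
        ∫ ω in B,
          (((Measure.pi fun j =>
              Mker Q Q0 lam (etaTildeSeq ℓ p p' ε X Y η0 k ω) (X k ω j)).prod
            (Measure.pi fun _ : Fin N =>
              ℓ.withDensity fun x =>
                ENNReal.ofReal (etaTildeSeq ℓ p p' ε X Y η0 k ω x))) A).toReal ∂Pr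

/-- An (isotropic) Gaussian transition-kernel density on `ℝ^d`. -/
def IsGaussianKernelDensity (p : Rd d → Rd d → ℝ) : Prop :=
  ∃ σ : ℝ, 0 < σ ∧ ∀ x y,
    p x y = (2 * Real.pi * σ ^ 2) ^ (-(d : ℝ) / 2) * Real.exp (-‖y - x‖ ^ 2 / (2 * σ ^ 2))

/-- The measure `m P'` on `ℝ^d` (density formulation). -/
def measP' {E : Set (Rd d)} (ℓ : Measure (Rd d)) (p' : Rd d → Rd d → ℝ) (m : Measure E) :
    Measure (Rd d) :=
  ℓ.withDensity fun y => ENNReal.ofReal (∫ x, p' x.1 y ∂m)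

/-- Distance on pairs `(m, η)`: TV distance plus TV distance of densities. -/
def pairDist {E : Set (Rd d)} (ℓ : Measure (Rd d)) (q q' : Measure E × (Rd d → ℝ)) : ℝ :=
  tvDist q.1 q'.1 + tvDen ℓ q.2 q'.2

/-- `Φ` has a unique fixed point in `P(E) × P*(ℝ^d)` (identifying measures having
densities with their densities, hence up to `ℓ`-a.e. equality in the second coordinate). -/
def UniqueFixedPointProp {E : Set (Rd d)} (Q Q0 : Kernel E E) (lam : ℝ)
    (ℓ : Measure (Rd d)) (p p' : Rd d → Rd d → ℝ) (ε : ℝ) : Prop :=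
  ∃ q : Measure E × (Rd d → ℝ),
    (IsProbabilityMeasure q.1 ∧ IsDensity ℓ q.2) ∧
    mStep Q Q0 lam q.2 q.1 = q.1 ∧ etaStep ℓ p p' ε q.1 q.2 =ᵐ[ℓ] q.2 ∧
    ∀ q' : Measure E × (Rd d → ℝ),
      (IsProbabilityMeasure q'.1 ∧ IsDensity ℓ q'.2) →
      mStep Q Q0 lam q'.2 q'.1 = q'.1 → etaStep ℓ p p' ε q'.1 q'.2 =ᵐ[ℓ] q'.2 →
      q'.1 = q.1 ∧ q'.2 =ᵐ[ℓ] q.2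

/-- `sup_{f ∈ B1(E)} E(|⟨m_n^N - q.1, f⟩| + ‖η_n^N - q.2‖_TV)` for the particle system. -/
def particleErr {E : Set (Rd d)} (ℓ : Measure (Rd d)) (p p' : Rd d → Rd d → ℝ) (ε : ℝ)
    {N : ℕ} {Ω : Type*} (mΩ : MeasurableSpace Ω) (Pr : @MeasureTheory.Measure Ω mΩ)
    (X : ℕ → Ω → (Fin N → E)) (η0N : Rd d → ℝ)
    (q : Measure E × (Rd d → ℝ)) (n : ℕ) : ℝ :=
  ⨆ f : B1 E, ∫ ω,
    (|∫ x, f.1 x ∂(empMeas (X n ω)) - ∫ x, f.1 x ∂q.1| +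
      tvDen ℓ (etaSeq ℓ p p' ε X η0N n ω) q.2) ∂Pr

/-- `sup_{f ∈ B1(E)} E(|⟨m̃_n^N - q.1, f⟩| + ‖η̃_n^N - q.2‖_TV)` for the particle scheme. -/
def schemeErr {E : Set (Rd d)} (ℓ : Measure (Rd d)) (p p' : Rd d → Rd d → ℝ) (ε : ℝ)
    {N : ℕ} {Ω : Type*} (mΩ : MeasurableSpace Ω) (Pr : @MeasureTheory.Measure Ω mΩ)
    (X : ℕ → Ω → (Fin N → E)) (Y : ℕ → Ω → (Fin N → Rd d)) (η0 : Rd d → ℝ)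
    (q : Measure E × (Rd d → ℝ)) (n : ℕ) : ℝ :=
  ⨆ f : B1 E, ∫ ω,
    (|∫ x, f.1 x ∂(empMeas (X n ω)) - ∫ x, f.1 x ∂q.1| +
      tvDen ℓ (etaTildeSeq ℓ p p' ε X Y η0 n ω) q.2) ∂Pr

section DobrushinAux

open MeasureTheory

variable {S : Type*} [MeasurableSpace S]

instance B1.instNonempty : Nonempty (B1 S) :=
  ⟨⟨fun _ => 0, measurable_const, fun _ => by norm_num⟩⟩

lemma integrable_of_B1 {f : S → ℝ} (hf : Measurable f) (hb : ∀ x, |f x| ≤ 1)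
    (μ : Measure S) [IsFiniteMeasure μ] : Integrable f μ :=
  (integrable_const 1).mono' hf.aestronglyMeasurable
    (Filter.Eventually.of_forall fun x => by simpa using hb x)

lemma abs_integral_le_one {f : S → ℝ} (hb : ∀ x, |f x| ≤ 1)
    (μ : Measure S) [IsProbabilityMeasure μ] : |∫ x, f x ∂μ| ≤ 1 := by
  have := norm_integral_le_of_norm_le_const (μ := μ) (f := f) (C := 1)
    (Filter.Eventually.of_forall fun x => by simpa using hb x)
  simpa [measure_univ] using this

lemma tv_bddAbove (μ ν : Measure S) [IsProbabilityMeasure μ] [IsProbabilityMeasure ν] :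
    BddAbove (Set.range fun f : B1 S => |∫ x, (f : S → ℝ) x ∂μ - ∫ x, (f : S → ℝ) x ∂ν|) := by
  refine ⟨2, ?_⟩
  rintro r ⟨f, rfl⟩
  have h1 : |∫ x, (f : S → ℝ) x ∂μ| ≤ 1 := abs_integral_le_one f.2.2 μ
  have h2 : |∫ x, (f : S → ℝ) x ∂ν| ≤ 1 := abs_integral_le_one f.2.2 ν
  calc |∫ x, (f : S → ℝ) x ∂μ - ∫ x, (f : S → ℝ) x ∂ν|
      ≤ |∫ x, (f : S → ℝ) x ∂μ| + |∫ x, (f : S → ℝ) x ∂ν| := abs_sub _ _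
    _ ≤ 2 := by linarith

lemma integral_bind_kernel (m : Measure S) [IsProbabilityMeasure m]
    (K : Kernel S S) [IsMarkovKernel K] {f : S → ℝ}
    (hf : Measurable f) (hb : ∀ x, |f x| ≤ 1) :
    ∫ y, f y ∂(m.bind K) = ∫ x, ∫ y, f y ∂(K x) ∂m := by
  have hbind : m.bind ⇑K = (m ⊗ₘ K).map Prod.snd := by
    ext s hs
    rw [Measure.bind_apply hs K.measurable.aemeasurable, Measure.map_apply measurable_snd hs,
      Measure.compProd_apply (measurable_snd hs)]
    rfl
  rw [hbind, integral_map measurable_snd.aemeasurable hf.aestronglyMeasurable,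
    Measure.integral_compProd (f := fun p : S × S => f p.2)
      (integrable_of_B1 (hf.comp measurable_snd) (fun p => hb p.2) _)]

lemma dobrushin (K : Kernel S S) [IsMarkovKernel K] (ν : Measure S)
    [IsProbabilityMeasure ν] (α : ℝ) (hα0 : 0 < α) (hα1 : α < 1)
    (hmin : ∀ x : S, ENNReal.ofReal α • ν ≤ K x)
    (m m' : Measure S) [IsProbabilityMeasure m] [IsProbabilityMeasure m'] :
    tvDist (m.bind K) (m'.bind K) ≤ (1 - α) * tvDist m m' := by
  have h1α : (0:ℝ) < 1 - α := by linarith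
  have hfinν : IsFiniteMeasure (ENNReal.ofReal α • ν) :=
    ⟨by simp [measure_univ, ENNReal.ofReal_lt_top]⟩
  simp only [tvDist]
  refine ciSup_le fun f => ?_
  obtain ⟨hfm, hfb⟩ := f.2
  -- the one-step averaged test function
  set g : S → ℝ := fun x => ∫ y, (f : S → ℝ) y ∂(K x) with hgdef
  have hgm : Measurable g := by
    have hsm : StronglyMeasurable
        (Function.uncurry fun (_ : S) (y : S) => (f : S → ℝ) y) :=
      hfm.stronglyMeasurable.comp_measurable measurable_snd
    exact (hsm.integral_kernel_prod_right (κ := K)).measurable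
  -- residual measures
  have hsub : ∀ x : S, (K x - ENNReal.ofReal α • ν) + ENNReal.ofReal α • ν = K x :=
    fun x => Measure.sub_add_cancel_of_le (hmin x)
  have hmass : ∀ x : S, (K x - ENNReal.ofReal α • ν) Set.univ = ENNReal.ofReal (1 - α) := by
    intro x
    rw [Measure.sub_apply MeasurableSet.univ (hmin x)]
    have : (ENNReal.ofReal (1 - α) : ℝ≥0∞) = ENNReal.ofReal 1 - ENNReal.ofReal α :=
      ENNReal.ofReal_sub 1 hα0.le
    simp [measure_univ, this]
  have hρint : ∀ x : S, Integrable (f : S → ℝ) (K x - ENNReal.ofReal α • ν) := fun x =>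
    (integrable_of_B1 hfm hfb (K x)).mono_measure Measure.sub_le
  set c : ℝ := ∫ y, (f : S → ℝ) y ∂ν with hcdef
  have hgdec : ∀ x : S,
      g x = (∫ y, (f : S → ℝ) y ∂(K x - ENNReal.ofReal α • ν)) + α * c := by
    intro x
    have : g x = ∫ y, (f : S → ℝ) y
        ∂((K x - ENNReal.ofReal α • ν) + ENNReal.ofReal α • ν) := by rw [hsub x]
    rw [this, integral_add_measure (hρint x)
      ((integrable_of_B1 hfm hfb ν).smul_measure ENNReal.ofReal_ne_top),
      integral_smul_measure, ENNReal.toReal_ofReal hα0.le]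
    rfl
  have hρb : ∀ x : S,
      |∫ y, (f : S → ℝ) y ∂(K x - ENNReal.ofReal α • ν)| ≤ 1 - α := by
    intro x
    have hfin : IsFiniteMeasure (K x - ENNReal.ofReal α • ν) :=
      isFiniteMeasure_of_le (K x) Measure.sub_le
    have := norm_integral_le_of_norm_le_const (μ := K x - ENNReal.ofReal α • ν)
      (f := (f : S → ℝ)) (C := 1) (Filter.Eventually.of_forall fun y => by simpa using hfb y)
    rw [measureReal_def, hmass x, ENNReal.toReal_ofReal h1α.le] at this
    simpa using this
  -- the normalized residual test function
  set h : S → ℝ := fun x => (g x - α * c) / (1 - α) with hhdef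
  have hhm : Measurable h := (hgm.sub measurable_const).div_const _
  have hhb : ∀ x, |h x| ≤ 1 := by
    intro x
    rw [hhdef]
    rw [abs_div, abs_of_pos h1α, div_le_one h1α]
    have heq : g x - α * c = ∫ y, (f : S → ℝ) y ∂(K x - ENNReal.ofReal α • ν) := by
      rw [hgdec x]; ring
    rw [heq]; exact hρb x
  have hgint : ∀ (μ : Measure S), IsProbabilityMeasure μ →
      ∫ x, g x ∂μ = (1 - α) * ∫ x, h x ∂μ + α * c := by
    intro μ hμ
    have hx : ∀ x, g x = (1 - α) * h x + α * c := by
      intro x; rw [hhdef]; field_simp; ring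
    calc ∫ x, g x ∂μ = ∫ x, ((1 - α) * h x + α * c) ∂μ := by simp_rw [hx]
      _ = (1 - α) * ∫ x, h x ∂μ + α * c := by
          rw [integral_add ((integrable_of_B1 hhm hhb μ).const_mul _) (integrable_const _),
            integral_const_mul, integral_const]
          simp [measure_univ]
  have key : ∫ y, (f : S → ℝ) y ∂(m.bind K) - ∫ y, (f : S → ℝ) y ∂(m'.bind K)
      = (1 - α) * ((∫ x, h x ∂m) - ∫ x, h x ∂m') := by
    rw [integral_bind_kernel m K hfm hfb, integral_bind_kernel m' K hfm hfb,
      hgint m inferInstance, hgint m' inferInstance]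
    ring
  rw [key, abs_mul, abs_of_pos h1α]
  have hle : |(∫ x, h x ∂m) - ∫ x, h x ∂m'| ≤ ⨆ f : B1 S,
      |∫ x, (f : S → ℝ) x ∂m - ∫ x, (f : S → ℝ) x ∂m'| :=
    le_ciSup (tv_bddAbove m m') (⟨h, hhm, hhb⟩ : B1 S)
  exact mul_le_mul_of_nonneg_left hle h1α.le

end DobrushinAux

section MkerAux

open MeasureTheory

variable {E : Set (Rd d)}

lemma mker_weight_measurable {η : Rd d → ℝ} (hη : Measurable η) (lam : ℝ) :
    Measurable (Function.uncurry fun x y : E =>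
      Real.exp (-(lam * max (η x.1 - η y.1) 0))) := by
  have hηE : Measurable fun x : E => η x.1 := hη.comp measurable_subtype_coe
  exact Real.measurable_exp.comp (Measurable.neg (Measurable.const_mul
    (((hηE.comp measurable_fst).sub (hηE.comp measurable_snd)).max measurable_const) lam))

set_option maxHeartbeats 1000000 in
lemma mker_measurable (Q Q0 : Kernel E E) [IsMarkovKernel Q] [IsMarkovKernel Q0]
    (lam : ℝ) {η : Rd d → ℝ} (hη : Measurable η) :
    Measurable (Mker Q Q0 lam η) := by
  have hD := mker_weight_measurable (E := E) hη lam
  apply Measure.measurable_of_measurable_coe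
  intro s hs
  simp only [Mker, Measure.coe_add, Pi.add_apply, Measure.smul_apply, smul_eq_mul]
  apply Measurable.add
  · have heq : ∀ x : E, ((Q x).withDensity fun y =>
        ENNReal.ofReal (Real.exp (-(lam * max (η x.1 - η y.1) 0)))) s
        = ∫⁻ y in s, ENNReal.ofReal (Real.exp (-(lam * max (η x.1 - η y.1) 0))) ∂Q x :=
      fun x => withDensity_apply _ hs
    simp_rw [heq]
    exact Measurable.setLIntegral_kernel_prod_right
      (f := fun x y : E => ENNReal.ofReal (Real.exp (-(lam * max (η x.1 - η y.1) 0))))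
      (ENNReal.measurable_ofReal.comp hD) hs
  · apply Measurable.mul
    · apply ENNReal.measurable_ofReal.comp
      apply Measurable.const_sub
      have hI : StronglyMeasurable fun x : E => ∫ y : E,
          (fun x y : E => Real.exp (-(lam * max (η x.1 - η y.1) 0))) x y ∂Q x :=
        MeasureTheory.StronglyMeasurable.integral_kernel_prod_right
          (κ := Q) (f := fun x y : E => Real.exp (-(lam * max (η x.1 - η y.1) 0)))
          hD.stronglyMeasurable
      exact hI.measurable
    · exact Q0.measurable_coe hs

set_option maxHeartbeats 1000000 in
lemma mker_isProb (Q Q0 : Kernel E E) [IsMarkovKernel Q] [IsMarkovKernel Q0]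
    {lam : ℝ} (hlam : 0 ≤ lam) {η : Rd d → ℝ} (hη : Measurable η) (x : E) :
    IsProbabilityMeasure (Mker Q Q0 lam η x) := by
  have hηE : Measurable fun y : E => η y.1 := hη.comp measurable_subtype_coe
  have hDx : Measurable fun y : E => Real.exp (-(lam * max (η x.1 - η y.1) 0)) :=
    Real.measurable_exp.comp
      ((((measurable_const.sub hηE).max measurable_const).const_mul lam).neg)
  have hDnn : ∀ y : E, 0 ≤ Real.exp (-(lam * max (η x.1 - η y.1) 0)) :=
    fun y => (Real.exp_pos _).le
  have hDle1 : ∀ y : E, Real.exp (-(lam * max (η x.1 - η y.1) 0)) ≤ 1 := by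
    intro y
    rw [Real.exp_le_one_iff]
    have h0 : (0:ℝ) ≤ max (η x.1 - η y.1) 0 := le_max_right _ _
    nlinarith
  have hDint : Integrable (fun y : E => Real.exp (-(lam * max (η x.1 - η y.1) 0))) (Q x) :=
    integrable_of_B1 hDx (fun y => by rw [abs_of_nonneg (hDnn y)]; exact hDle1 y) _
  have hI0 : 0 ≤ ∫ z, Real.exp (-(lam * max (η x.1 - η z.1) 0)) ∂Q x :=
    integral_nonneg hDnn
  have hI1 : ∫ z, Real.exp (-(lam * max (η x.1 - η z.1) 0)) ∂Q x ≤ 1 := by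
    have := integral_mono hDint (integrable_const 1) hDle1
    simpa [measure_univ] using this
  constructor
  simp only [Mker, Measure.coe_add, Pi.add_apply, Measure.smul_apply, smul_eq_mul]
  rw [withDensity_apply _ MeasurableSet.univ, Measure.restrict_univ, measure_univ, mul_one,
    ← ofReal_integral_eq_lintegral_ofReal hDint (Filter.Eventually.of_forall hDnn),
    ← ENNReal.ofReal_add hI0 (by linarith)]
  norm_num

end MkerAux

/-- **Lemma (Dobrushin-type contraction for `M^η`)**. -/
theorem stmt13 {d : ℕ}
    (E : Set (Rd d)) (hEc : IsCompact E) (hEi : (interior E).Nonempty)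
    (hEm : MeasurableSet E)
    (ℓ : Measure (Rd d))
    (Q Q0 : Kernel E E) (hQ : IsMarkovKernel Q) (hQ0 : IsMarkovKernel Q0)
    (p p' : Rd d → Rd d → ℝ)
    (hp : IsKernelDensity ℓ p) (hp' : IsKernelDensity ℓ p')
    (lam : ℝ) (hlam : 0 < lam)
    -- Assumption (AQ)
    (εQ : ℝ) (hεQ : εQ ∈ Set.Ioo (0 : ℝ) 1)
    (ℓ1 : Measure E) (hℓ1 : IsProbabilityMeasure ℓ1)
    (hAQ : ∀ (x : E) (A : Set E), MeasurableSet A → ENNReal.ofReal εQ * ℓ1 A ≤ Q x A)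
:
    ∀ m m' : Measure E, IsProbabilityMeasure m → IsProbabilityMeasure m' →
      ∀ η : Rd d → ℝ, IsDensity ℓ η →
      ∀ C : ℝ, (∀ x y, |η x - η y| ≤ C) →
        tvDist (mStep Q Q0 lam η m) (mStep Q Q0 lam η m')
          ≤ (1 - εQ * Real.exp (-(lam * C))) * tvDist m m'  := by
  intro m m' hm hm' η hη C hC
  obtain ⟨hηm, hηnn, hηint⟩ := hη
  haveI := hm; haveI := hm'; haveI := hℓ1
  have hC0 : (0:ℝ) ≤ C := by simpa using hC 0 0
  set e : ℝ := Real.exp (-(lam * C)) with hedef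
  have he1 : e ≤ 1 := by
    rw [hedef, Real.exp_le_one_iff]
    nlinarith
  have hα0 : 0 < εQ * e := mul_pos hεQ.1 (Real.exp_pos _)
  have hα1 : εQ * e < 1 := by nlinarith [hεQ.1, hεQ.2, Real.exp_pos (-(lam * C))]
  -- the kernel `M^η`
  let K : Kernel E E := ⟨Mker Q Q0 lam η, mker_measurable Q Q0 lam hηm⟩
  haveI : IsMarkovKernel K := ⟨fun x => mker_isProb Q Q0 hlam.le hηm x⟩
  -- minorization
  have hmin : ∀ x : E, ENNReal.ofReal (εQ * e) • ℓ1 ≤ K x := by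
    intro x
    rw [Measure.le_iff]
    intro s hs
    have hKs : (ENNReal.ofReal e) * Q x s ≤ K x s := by
      show _ ≤ Mker Q Q0 lam η x s
      simp only [Mker, Measure.coe_add, Pi.add_apply]
      refine le_trans ?_ (le_add_of_nonneg_right zero_le)
      rw [withDensity_apply _ hs]
      calc ENNReal.ofReal e * Q x s
          = ∫⁻ _ in s, ENNReal.ofReal e ∂Q x := by rw [setLIntegral_const]
        _ ≤ ∫⁻ y in s, ENNReal.ofReal
              (Real.exp (-(lam * max (η x.1 - η y.1) 0))) ∂Q x := by
            refine lintegral_mono fun y => ENNReal.ofReal_le_ofReal ?_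
            rw [hedef]
            apply Real.exp_le_exp.mpr
            have hmax : max (η x.1 - η y.1) 0 ≤ C :=
              max_le (le_trans (le_abs_self _) (hC _ _)) hC0
            nlinarith
    calc (ENNReal.ofReal (εQ * e) • ℓ1) s
        = ENNReal.ofReal e * (ENNReal.ofReal εQ * ℓ1 s) := by
          rw [Measure.smul_apply, smul_eq_mul, ENNReal.ofReal_mul hεQ.1.le, mul_comm
            (ENNReal.ofReal εQ), mul_assoc]
      _ ≤ ENNReal.ofReal e * Q x s :=
          mul_le_mul_right (hAQ x s hs) _
      _ ≤ K x s := hKs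
  have hstep : ∀ μ : Measure E, mStep Q Q0 lam η μ = μ.bind ⇑K := fun μ => rfl
  rw [hstep m, hstep m']
  exact dobrushin K ℓ1 (εQ * e) hα0 hα1 hmin m m'
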